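/- Let (R, m, k) be an Artinian Gorenstein local ring with m^2 = x·m, µ(m^2) = m ≥ 2, embedding dimension n, with minimal generators x = x_1, x_2, ..., x_n of m chosen so that x_1·x_j = 0 for m+1 ≤ j ≤ n. Then the pairing (x_2,...,x_m)/m(x_2,...,x_m) × ((0:_R x_1) ∩ m^2)/m((0:_R x_1) ∩ m^2) → soc(R) induced by multiplication is well-defined and non-degenerate. -/

import Mathlib

open IsLocalRing

/-- `mu I` is the minimal number of generators of the ideal `I`. -/
noncomputable def mu {R : Type*} [CommRing R] (I : Ideal R) : ℕ :=
  sInf {n | ∃ s : Finset R, s.card = n ∧ Ideal.span (s : Set R) = I}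

section Aux

set_option linter.unusedSectionVars false

variable {R : Type*} [CommRing R] [IsArtinianRing R] [IsLocalRing R]

lemma mem_colon_bot {I : Ideal R} {b : R} :
    b ∈ Submodule.colon (⊥ : Ideal R) (I : Set R) ↔ ∀ r ∈ I, b * r = 0 := by
  rw [Submodule.mem_colon]
  simp [smul_eq_mul]

lemma nilpM : ∃ k : ℕ, (maximalIdeal R) ^ k = ⊥ := by
  obtain ⟨k, hk⟩ := IsArtinianRing.isNilpotent_jacobson_bot (R := R)
  refine ⟨k, ?_⟩
  rw [jacobson_eq_maximalIdeal ⊥ bot_ne_top] at hk; rwa [Ideal.zero_eq_bot] at hk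

lemma nakayama (N I : Ideal R) (h : I ≤ N ⊔ maximalIdeal R * I) : I ≤ N := by
  obtain ⟨k, hk⟩ := nilpM (R := R)
  have key : ∀ t : ℕ, I ≤ N ⊔ (maximalIdeal R) ^ t * I := by
    intro t
    induction t with
    | zero => rw [pow_zero, one_mul]; exact le_sup_right
    | succ t ih =>
      refine ih.trans (sup_le le_sup_left ?_)
      have h2 : (maximalIdeal R) ^ t * I ≤ (maximalIdeal R) ^ t * (N ⊔ maximalIdeal R * I) :=
        Ideal.mul_mono le_rfl h
      refine h2.trans ?_
      rw [Submodule.mul_sup]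
      refine sup_le (le_sup_of_le_left Ideal.mul_le_right) ?_
      rw [show (maximalIdeal R) ^ t * (maximalIdeal R * I) = (maximalIdeal R) ^ (t+1) * I by
        rw [pow_succ]; ring]
      exact le_sup_right
  have := key k
  rwa [hk, Submodule.bot_mul, sup_bot_eq] at this

lemma socle_min (z : R) (hsoc : Submodule.colon (⊥ : Ideal R) (maximalIdeal R : Set R) = Ideal.span {z})
    {I : Ideal R} (hI : I ≠ ⊥) : z ∈ I := by
  classical
  obtain ⟨a, haI, ha0⟩ := (Submodule.ne_bot_iff I).mp hI
  obtain ⟨k, hk⟩ := nilpM (R := R)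
  have hex : ∃ t : ℕ, (maximalIdeal R) ^ t * Ideal.span {a} = ⊥ := ⟨k, by rw [hk, Submodule.bot_mul]⟩
  have h0 : ¬ ((maximalIdeal R) ^ 0 * Ideal.span {a} = ⊥) := by
    rw [pow_zero, one_mul]
    intro h
    exact ha0 (Ideal.span_singleton_eq_bot.mp h)
  have hspec : (maximalIdeal R) ^ (Nat.find hex) * Ideal.span {a} = ⊥ := Nat.find_spec hex
  have ht0pos : Nat.find hex ≠ 0 := fun h => h0 (h ▸ hspec)
  obtain ⟨t, ht⟩ : ∃ t, Nat.find hex = t + 1 := ⟨Nat.find hex - 1, by omega⟩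
  have hnot : (maximalIdeal R) ^ t * Ideal.span {a} ≠ ⊥ := Nat.find_min hex (by omega)
  obtain ⟨cc, hcc, hcc0⟩ := (Submodule.ne_bot_iff _).mp hnot
  have hcsoc : cc ∈ Ideal.span {z} := by
    rw [← hsoc, mem_colon_bot]
    intro p hp
    have h1 : cc * p ∈ ((maximalIdeal R) ^ t * Ideal.span {a}) * maximalIdeal R :=
      Ideal.mul_mem_mul hcc hp
    have heq : ((maximalIdeal R) ^ t * Ideal.span {a}) * maximalIdeal R
        = (maximalIdeal R) ^ (t+1) * Ideal.span {a} := by rw [pow_succ]; ring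
    rw [heq, ← ht, hspec, Submodule.mem_bot] at h1
    exact h1
  obtain ⟨r, hr⟩ := Ideal.mem_span_singleton'.mp hcsoc
  have hrU : IsUnit r := by
    by_contra h
    have hrM : r ∈ maximalIdeal R := (mem_maximalIdeal r).mpr (mem_nonunits_iff.mpr h)
    have hz : z ∈ Submodule.colon (⊥ : Ideal R) (maximalIdeal R : Set R) := by
      rw [hsoc]; exact Submodule.mem_span_singleton_self z
    have hzr : z * r = 0 := mem_colon_bot.mp hz r hrM
    apply hcc0
    rw [← hr]
    linear_combination hzr
  obtain ⟨ur, hur⟩ := hrU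
  have hzc : z = (↑ur⁻¹ : R) * cc := by
    rw [← hr, ← hur, ← mul_assoc, Units.inv_mul, one_mul]
  have hccI : cc ∈ I := by
    have hle : (maximalIdeal R) ^ t * Ideal.span {a} ≤ I :=
      le_trans Ideal.mul_le_right (by rwa [Ideal.span_le, Set.singleton_subset_iff])
    exact hle hcc
  rw [hzc]
  exact Ideal.mul_mem_left _ _ hccI

/-- A finitely generated module killed by the maximal ideal is Noetherian. -/
lemma noe_of_killed {P : Type*} [AddCommGroup P] [Module R P] (hfin : Module.Finite R P)
    (hann : ∀ r ∈ maximalIdeal R, ∀ p : P, r • p = (0:P)) : IsNoetherian R P := by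
  have hts : Module.IsTorsionBySet R P ((maximalIdeal R : Ideal R) : Set R) := by
    intro p r
    exact hann r.1 r.2 p
  letI : Module (R ⧸ maximalIdeal R) P := hts.module
  haveI : IsScalarTower R (R ⧸ maximalIdeal R) P := hts.isScalarTower
  haveI := hfin
  haveI : Module.Finite (R ⧸ maximalIdeal R) P :=
    Module.Finite.of_restrictScalars_finite R (R ⧸ maximalIdeal R) P
  letI : Field (R ⧸ maximalIdeal R) := Ideal.Quotient.field (maximalIdeal R)
  haveI : IsNoetherian (R ⧸ maximalIdeal R) P :=
    isNoetherian_of_isNoetherianRing_of_finite (R ⧸ maximalIdeal R) P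
  have hwf : WellFounded fun (a b : Submodule (R ⧸ maximalIdeal R) P) => a > b :=
    isNoetherian_iff.mp inferInstance
  rw [isNoetherian_iff]
  let g : Submodule R P → Submodule (R ⧸ maximalIdeal R) P := fun N =>
    { carrier := N
      add_mem' := fun h1 h2 => N.add_mem h1 h2
      zero_mem' := N.zero_mem
      smul_mem' := by
        intro cc p hp
        obtain ⟨c, rfl⟩ := Ideal.Quotient.mk_surjective cc
        rw [hts.mk_smul]
        exact N.smul_mem c hp }
  have hg : ∀ {N N' : Submodule R P}, N < N' → g N < g N' := by
    intro N N' h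
    rw [SetLike.lt_iff_le_and_exists] at h ⊢
    exact ⟨fun x hx => h.1 hx, h.2⟩
  exact Subrelation.wf (fun {a b} hab => hg hab) (InvImage.wf g hwf)

lemma noeth (hfg : (maximalIdeal R).FG) : IsNoetherianRing R := by
  obtain ⟨k, hk⟩ := nilpM (R := R)
  have hpowfg : ∀ i : ℕ, ((maximalIdeal R) ^ i).FG := by
    intro i
    induction i with
    | zero => exact ⟨{1}, by simp⟩
    | succ i ih => rw [pow_succ]; exact Submodule.FG.mul ih hfg
  have H : ∀ i : ℕ, IsNoetherian R (R ⧸ ((maximalIdeal R) ^ i : Ideal R)) := by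
    intro i
    induction i with
    | zero =>
      haveI : Subsingleton (R ⧸ ((maximalIdeal R) ^ 0 : Ideal R)) := by
        rw [Submodule.Quotient.subsingleton_iff, pow_zero, Ideal.one_eq_top]
      rw [isNoetherian_iff]
      constructor
      intro a
      constructor
      intro b hb
      exfalso
      exact absurd (Subsingleton.elim b a) (ne_of_gt hb)
    | succ i ih =>
      set S : Ideal R := (maximalIdeal R) ^ (i+1) with hS
      set N : Submodule R (R ⧸ S) := Submodule.map S.mkQ ((maximalIdeal R) ^ i) with hN
      haveI hfinN : Module.Finite R N :=
        Module.Finite.iff_fg.mpr (Submodule.FG.map _ (hpowfg i))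
      have hannN : ∀ r ∈ maximalIdeal R, ∀ p : N, r • p = (0 : N) := by
        intro r hr p
        obtain ⟨q, hq, hqe⟩ := p.2
        apply Subtype.ext
        show r • (p : R ⧸ S) = 0
        rw [← hqe, ← map_smul]
        rw [Submodule.mkQ_apply, Submodule.Quotient.mk_eq_zero]
        have : q * r ∈ (maximalIdeal R) ^ i * maximalIdeal R := Ideal.mul_mem_mul hq hr
        rw [← pow_succ] at this
        rwa [smul_eq_mul, mul_comm]
      haveI : IsNoetherian R N := noe_of_killed hfinN hannN
      have e := Submodule.quotientQuotientEquivQuotient S ((maximalIdeal R) ^ i)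
        (Ideal.pow_le_pow_right (by omega))
      haveI : IsNoetherian R ((R ⧸ S) ⧸ N) := isNoetherian_of_linearEquiv e.symm
      exact (isNoetherian_iff_submodule_quotient N).mpr ⟨‹_›, ‹_›⟩
  have := H k
  rw [hk] at this
  exact isNoetherian_of_linearEquiv (Submodule.quotEquivOfEqBot (⊥ : Ideal R) rfl)


lemma height_add_one_le {a b : Ideal R} (h : a < b) :
    Order.height a + 1 ≤ Order.height b := by
  rw [Order.height_eq_iSup_lt_height b]
  exact le_iSup₂ (f := fun y (_ : y < b) => Order.height y + 1) a h

lemma cov_height (T : Ideal R) : ∀ C : Ideal R, C ⋖ T → Order.height T ≤ Order.height C + 1 := by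
  refine IsArtinian.induction
    (P := fun T => ∀ C : Ideal R, C ⋖ T → Order.height T ≤ Order.height C + 1)
    (fun T IH C hCT => ?_) T
  rw [Order.height_eq_iSup_lt_height T]
  refine iSup₂_le fun D hDT => ?_
  have hD : Order.height D ≤ Order.height C := by
    by_cases hDC : D ≤ C
    · exact Order.height_mono hDC
    · have hsupT : C ⊔ D = T := by
        rcases eq_or_lt_of_le (sup_le hCT.le hDT.le : C ⊔ D ≤ T) with heq | hlt2
        · exact heq
        · exfalso
          refine hCT.2 ?_ hlt2
          refine lt_of_le_of_ne le_sup_left (fun hh => hDC ?_)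
          rw [hh]
          exact le_sup_right
      have hCcov : C ⋖ C ⊔ D := by rw [hsupT]; exact hCT
      have hinfcov : C ⊓ D ⋖ D := inf_covBy_of_covBy_sup_left hCcov
      have h1 : Order.height D ≤ Order.height (C ⊓ D) + 1 := IH D hDT (C ⊓ D) hinfcov
      have h2 : C ⊓ D < C := by
        rcases lt_or_eq_of_le (inf_le_left : C ⊓ D ≤ C) with hlt | heq2
        · exact hlt
        · exfalso
          have hCD : C ≤ D := inf_eq_left.mp heq2
          have hDD : C ⊔ D = D := sup_eq_right.mpr hCD
          rw [hDD] at hsupT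
          exact hDT.ne hsupT
      exact h1.trans (height_add_one_le h2)
  exact add_le_add_left hD 1

lemma height_ne_top (hNoe : IsNoetherianRing R) (I : Ideal R) : Order.height I ≠ ⊤ := by
  haveI : IsNoetherian R R := hNoe
  obtain ⟨f, hmin, N, hmax, hcov⟩ := exists_covBy_seq_of_wellFoundedLT_wellFoundedGT (Ideal R)
  have key : ∀ i : ℕ, i ≤ N → Order.height (f i) ≤ (i : ℕ∞) := by
    intro i
    induction i with
    | zero =>
      intro _
      rw [Order.height_eq_zero.mpr hmin]
      simp
    | succ i ih =>
      intro hiN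
      have h1 := cov_height (f (i+1)) (f i) (hcov i (by omega))
      have h2 := ih (by omega)
      calc Order.height (f (i+1)) ≤ Order.height (f i) + 1 := h1
        _ ≤ (i : ℕ∞) + 1 := add_le_add_left h2 1
        _ = ((i+1 : ℕ) : ℕ∞) := by push_cast; ring
  have hft : f N = ⊤ := hmax.eq_top
  have hle : Order.height I ≤ (N : ℕ∞) :=
    le_trans (Order.height_mono (hft ▸ le_top)) (key N le_rfl)
  exact (lt_of_le_of_lt hle (WithTop.coe_lt_top N)).ne

lemma colon_anti {I J : Ideal R} (h : I ≤ J) :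
    Submodule.colon (⊥ : Ideal R) (J : Set R) ≤ Submodule.colon (⊥ : Ideal R) (I : Set R) := by
  intro t ht
  rw [mem_colon_bot] at ht ⊢
  exact fun r hr => ht r (h hr)

lemma colon_bot_bot : Submodule.colon (⊥ : Ideal R) ((⊥ : Ideal R) : Set R) = ⊤ := by
  rw [eq_top_iff]
  intro t _
  rw [mem_colon_bot]
  intro r hr
  rw [Submodule.mem_bot] at hr
  rw [hr, mul_zero]

lemma colon_bot_top : Submodule.colon (⊥ : Ideal R) ((⊤ : Ideal R) : Set R) = ⊥ := by
  rw [eq_bot_iff]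
  intro t ht
  rw [mem_colon_bot] at ht
  have := ht 1 trivial
  rw [mul_one] at this
  rw [Submodule.mem_bot]
  exact this

lemma le_colon_colon (I : Ideal R) : I ≤ Submodule.colon (⊥ : Ideal R) (Submodule.colon (⊥ : Ideal R) (I : Set R) : Set R) := by
  intro i hi
  rw [mem_colon_bot]
  intro t ht
  have := mem_colon_bot.mp ht i hi
  linear_combination this

lemma costep (hNoe : IsNoetherianRing R) {I : Ideal R} (hI : I ≠ ⊥) :
    ∃ (I' : Ideal R) (a : R), I' < I ∧ a ∈ I ∧ (∀ y ∈ maximalIdeal R, y * a ∈ I') ∧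
      I ≤ I' ⊔ Ideal.span {a} := by
  haveI : IsNoetherian R R := hNoe
  have hMI : maximalIdeal R * I ≠ I := by
    intro h
    apply hI
    rw [eq_bot_iff]
    exact nakayama ⊥ I (by rw [bot_sup_eq, h])
  have hlt : maximalIdeal R * I < I := lt_of_le_of_ne Ideal.mul_le_right hMI
  obtain ⟨a, haI, haMI⟩ := SetLike.exists_of_lt hlt
  set S : Set (Ideal R) := {C : Ideal R | maximalIdeal R * I ≤ C ∧ C ≤ I ∧ a ∉ C} with hSdef
  have hSne : maximalIdeal R * I ∈ S := ⟨le_rfl, Ideal.mul_le_right, haMI⟩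
  obtain ⟨I', hI'S, hI'max⟩ := (isNoetherian_iff.mp ‹IsNoetherian R R›).has_min S ⟨_, hSne⟩
  refine ⟨I', a, lt_of_le_of_ne hI'S.2.1 (fun h => hI'S.2.2 (h ▸ haI)), haI, ?_, ?_⟩
  · intro y hy
    exact hI'S.1 (Ideal.mul_mem_mul hy haI)
  · intro w hw
    by_cases hwI' : w ∈ I'
    · exact Submodule.mem_sup_left hwI'
    have hgt : I' < I' ⊔ Ideal.span {w} :=
      lt_of_le_of_ne le_sup_left (fun hh => hwI' (by
        rw [hh]
        exact Submodule.mem_sup_right (Submodule.mem_span_singleton_self w)))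
    have hmem : a ∈ I' ⊔ Ideal.span {w} := by
      by_contra ha
      refine hI'max (I' ⊔ Ideal.span {w}) ?_ hgt
      exact ⟨le_trans hI'S.1 le_sup_left,
        sup_le hI'S.2.1 (by rwa [Ideal.span_le, Set.singleton_subset_iff]), ha⟩
    obtain ⟨u, huI', v, hv, huv⟩ := Submodule.mem_sup.mp hmem
    obtain ⟨r, hr⟩ := Ideal.mem_span_singleton'.mp hv
    have hrU : IsUnit r := by
      by_contra h
      have hrM : r ∈ maximalIdeal R := (mem_maximalIdeal r).mpr (mem_nonunits_iff.mpr h)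
      apply hI'S.2.2
      have : r * w ∈ I' := hI'S.1 (Ideal.mul_mem_mul hrM hw)
      rw [← huv, ← hr]
      exact I'.add_mem huI' this
    obtain ⟨ur, hur⟩ := hrU
    have hwe : w = (↑ur⁻¹ : R) * a - (↑ur⁻¹ : R) * u := by
      have h1 : (↑ur : R) * w = a - u := by rw [hur, hr]; linear_combination huv
      calc w = (↑ur⁻¹ : R) * ((↑ur : R) * w) := by rw [← mul_assoc, Units.inv_mul, one_mul]
        _ = (↑ur⁻¹ : R) * a - (↑ur⁻¹ : R) * u := by rw [h1]; ring
    rw [hwe]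
    exact Submodule.sub_mem _
      (Submodule.mem_sup_right (Ideal.mul_mem_left _ _ (Submodule.mem_span_singleton_self a)))
      (Submodule.mem_sup_left (Ideal.mul_mem_left _ _ huI'))

lemma upstep {I : Ideal R} (hI : I ≠ ⊤) :
    ∃ a : R, a ∉ I ∧ ∀ y ∈ maximalIdeal R, y * a ∈ I := by
  classical
  obtain ⟨k, hk⟩ := nilpM (R := R)
  have h1 : (1:R) ∉ I := (Ideal.ne_top_iff_one I).mp hI
  have hex : ∃ t : ℕ, (maximalIdeal R) ^ t ≤ I := ⟨k, by rw [hk]; exact bot_le⟩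
  have hspec : (maximalIdeal R) ^ (Nat.find hex) ≤ I := Nat.find_spec hex
  have ht0 : Nat.find hex ≠ 0 := by
    intro h
    rw [h, pow_zero, Ideal.one_eq_top] at hspec
    exact h1 (hspec trivial)
  obtain ⟨t, ht⟩ : ∃ t, Nat.find hex = t + 1 := ⟨Nat.find hex - 1, by omega⟩
  have hnot : ¬ ((maximalIdeal R) ^ t ≤ I) := Nat.find_min hex (by omega)
  obtain ⟨a, haM, haI⟩ := SetLike.not_le_iff_exists.mp hnot
  refine ⟨a, haI, fun y hy => ?_⟩
  apply hspec
  rw [ht, pow_succ']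
  exact Ideal.mul_mem_mul hy haM

lemma sup_height (C : Ideal R) (a : R) (ha : ∀ y ∈ maximalIdeal R, y * a ∈ C) :
    Order.height (C ⊔ Ideal.span {a}) ≤ Order.height C + 1 := by
  by_cases haC : a ∈ C
  · have heq : C ⊔ Ideal.span {a} = C :=
      sup_eq_left.mpr (by rwa [Ideal.span_le, Set.singleton_subset_iff])
    rw [heq]
    exact le_self_add
  · have hcov : C ⋖ C ⊔ Ideal.span {a} := by
      constructor
      · refine lt_of_le_of_ne le_sup_left (fun hh => haC ?_)
        rw [hh]
        exact Submodule.mem_sup_right (Submodule.mem_span_singleton_self a)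
      · intro D hCD hDT
        obtain ⟨d, hdD, hdC⟩ := SetLike.exists_of_lt hCD
        obtain ⟨u, huC, v, hv, huv⟩ := Submodule.mem_sup.mp (hDT.le hdD)
        obtain ⟨r, hr⟩ := Ideal.mem_span_singleton'.mp hv
        have hrU : IsUnit r := by
          by_contra h
          have hrM : r ∈ maximalIdeal R := (mem_maximalIdeal r).mpr (mem_nonunits_iff.mpr h)
          apply hdC
          rw [← huv, ← hr]
          exact C.add_mem huC (ha r hrM)
        obtain ⟨ur, hur⟩ := hrU
        have haD : a ∈ D := by
          have h1 : (↑ur : R) * a = d - u := by rw [hur, hr]; linear_combination huv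
          have h2 : a = (↑ur⁻¹ : R) * (d - u) := by
            rw [← h1, ← mul_assoc, Units.inv_mul, one_mul]
          rw [h2]
          exact D.mul_mem_left _ (Submodule.sub_mem _ hdD (hCD.le huC))
        exact absurd (sup_le hCD.le (by rwa [Ideal.span_le, Set.singleton_subset_iff]))
          hDT.not_ge
    exact cov_height _ _ hcov

lemma colonstep (z : R) (hsoc : Submodule.colon (⊥ : Ideal R) (maximalIdeal R : Set R) = Ideal.span {z})
    {C T : Ideal R} (a : R) (hCT : C ≤ T) (haT : T ≤ C ⊔ Ideal.span {a})
    (haM : ∀ y ∈ maximalIdeal R, y * a ∈ C) :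
    Order.height (Submodule.colon (⊥ : Ideal R) (C : Set R)) ≤ Order.height (Submodule.colon (⊥ : Ideal R) (T : Set R)) + 1 := by
  by_cases heq : Submodule.colon (⊥ : Ideal R) (C : Set R) ≤ Submodule.colon (⊥ : Ideal R) (T : Set R)
  · exact (Order.height_mono heq).trans le_self_add
  obtain ⟨t, htJc, htJt⟩ := SetLike.not_le_iff_exists.mp heq
  have hz_ann : ∀ y ∈ maximalIdeal R, y * z = 0 := by
    intro y hy
    have hzmem : z ∈ Submodule.colon (⊥ : Ideal R) (maximalIdeal R : Set R) := by
      rw [hsoc]; exact Submodule.mem_span_singleton_self z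
    have := mem_colon_bot.mp hzmem y hy
    linear_combination this
  have hsocmem : ∀ t' ∈ Submodule.colon (⊥ : Ideal R) (C : Set R), t' * a ∈ Ideal.span {z} := by
    intro t' ht'
    rw [← hsoc, mem_colon_bot]
    intro y hy
    have := mem_colon_bot.mp ht' (y*a) (haM y hy)
    linear_combination this
  have hta : t * a ≠ 0 := by
    intro h0
    apply htJt
    rw [mem_colon_bot]
    intro p hp
    obtain ⟨u, huC, v, hv, huv⟩ := Submodule.mem_sup.mp (haT hp)
    obtain ⟨r, hr⟩ := Ideal.mem_span_singleton'.mp hv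
    have h1 : t * u = 0 := mem_colon_bot.mp htJc u huC
    have : p = u + r * a := by rw [hr]; linear_combination -huv
    rw [this]
    linear_combination h1 + r * h0
  obtain ⟨α, hα⟩ := Ideal.mem_span_singleton'.mp (hsocmem t htJc)
  have hαU : IsUnit α := by
    by_contra h
    have hM : α ∈ maximalIdeal R := (mem_maximalIdeal α).mpr (mem_nonunits_iff.mpr h)
    apply hta
    rw [← hα]
    exact hz_ann α hM
  obtain ⟨uα, huα⟩ := hαU
  have hinv : (↑uα⁻¹ : R) * α = 1 := by rw [← huα]; exact uα.inv_mul
  have hle : Submodule.colon (⊥ : Ideal R) (C : Set R) ≤ Submodule.colon (⊥ : Ideal R) (T : Set R) ⊔ Ideal.span {t} := by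
    intro t' ht'
    obtain ⟨β, hβ⟩ := Ideal.mem_span_singleton'.mp (hsocmem t' ht')
    refine Submodule.mem_sup.mpr ⟨t' - β * (↑uα⁻¹ : R) * t, ?_,
      β * (↑uα⁻¹ : R) * t, Ideal.mem_span_singleton'.mpr ⟨β * (↑uα⁻¹ : R), rfl⟩, by ring⟩
    rw [mem_colon_bot]
    intro p hp
    obtain ⟨u, huC, v, hv, huv⟩ := Submodule.mem_sup.mp (haT hp)
    obtain ⟨r, hr⟩ := Ideal.mem_span_singleton'.mp hv
    have h1 : t' * u = 0 := mem_colon_bot.mp ht' u huC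
    have h2 : t * u = 0 := mem_colon_bot.mp htJc u huC
    have hp' : p = u + r * a := by rw [hr]; linear_combination -huv
    rw [hp']
    linear_combination h1 - (β * (↑uα⁻¹ : R)) * h2 - r * hβ + (β * (↑uα⁻¹:R) * r) * hα
      - (r * β * z) * hinv
  have hann : ∀ y ∈ maximalIdeal R, y * t ∈ Submodule.colon (⊥ : Ideal R) (T : Set R) := by
    intro y hy
    rw [mem_colon_bot]
    intro p hp
    obtain ⟨u, huC, v, hv, huv⟩ := Submodule.mem_sup.mp (haT hp)
    obtain ⟨r, hr⟩ := Ideal.mem_span_singleton'.mp hv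
    have h2 : t * u = 0 := mem_colon_bot.mp htJc u huC
    have hp' : p = u + r * a := by rw [hr]; linear_combination -huv
    rw [hp']
    linear_combination y * h2 - (r*y) * hα + (r * α) * hz_ann y hy
  calc Order.height (Submodule.colon (⊥ : Ideal R) (C : Set R))
      ≤ Order.height (Submodule.colon (⊥ : Ideal R) (T : Set R) ⊔ Ideal.span {t}) := Order.height_mono hle
    _ ≤ Order.height (Submodule.colon (⊥ : Ideal R) (T : Set R)) + 1 := sup_height _ t hann

lemma mainMH (hNoe : IsNoetherianRing R) (z : R)
    (hsoc : Submodule.colon (⊥ : Ideal R) (maximalIdeal R : Set R) = Ideal.span {z}) (I : Ideal R) :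
    Order.height (⊤ : Ideal R) ≤ Order.height (Submodule.colon (⊥ : Ideal R) (I : Set R)) + Order.height I := by
  refine IsArtinian.induction (P := fun (I : Ideal R) => Order.height (⊤ : Ideal R) ≤
    Order.height (Submodule.colon (⊥ : Ideal R) (I : Set R)) + Order.height I) (fun I IH => ?_) I
  by_cases hI : I = ⊥
  · subst hI
    rw [colon_bot_bot]
    exact le_self_add
  obtain ⟨I', a, hlt, haI, haM, hcover⟩ := costep hNoe hI
  have h1 := IH I' hlt
  have h2 : Order.height (Submodule.colon (⊥ : Ideal R) (I' : Set R)) ≤ Order.height (Submodule.colon (⊥ : Ideal R) (I : Set R)) + 1 :=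
    colonstep z hsoc a hlt.le hcover haM
  have h3 : Order.height I' + 1 ≤ Order.height I := height_add_one_le hlt
  calc Order.height (⊤ : Ideal R) ≤ Order.height (Submodule.colon (⊥ : Ideal R) (I' : Set R)) + Order.height I' := h1
    _ ≤ (Order.height (Submodule.colon (⊥ : Ideal R) (I : Set R)) + 1) + Order.height I' := add_le_add_left h2 _
    _ = Order.height (Submodule.colon (⊥ : Ideal R) (I : Set R)) + (Order.height I' + 1) := by ring
    _ ≤ Order.height (Submodule.colon (⊥ : Ideal R) (I : Set R)) + Order.height I := add_le_add_right h3 _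

lemma mainME (hNoe : IsNoetherianRing R) (z : R)
    (hsoc : Submodule.colon (⊥ : Ideal R) (maximalIdeal R : Set R) = Ideal.span {z}) (I : Ideal R) :
    Order.height (Submodule.colon (⊥ : Ideal R) (I : Set R)) + Order.height I ≤ Order.height (⊤ : Ideal R) := by
  haveI : IsNoetherian R R := hNoe
  refine IsNoetherian.induction (P := fun (I : Ideal R) => Order.height (Submodule.colon (⊥ : Ideal R) (I : Set R)) +
    Order.height I ≤ Order.height (⊤ : Ideal R)) (fun I IH => ?_) I
  by_cases hI : I = ⊤
  · subst hI
    rw [colon_bot_top, Order.height_eq_zero.mpr isMin_bot, zero_add]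
  obtain ⟨a, haI, haM⟩ := upstep hI
  have hlt : I < I ⊔ Ideal.span {a} :=
    lt_of_le_of_ne le_sup_left (fun hh => haI (by
      rw [hh]; exact Submodule.mem_sup_right (Submodule.mem_span_singleton_self a)))
  have h1 := IH _ hlt
  have h2 : Order.height (Submodule.colon (⊥ : Ideal R) (I : Set R)) ≤
      Order.height (Submodule.colon (⊥ : Ideal R) ((I ⊔ Ideal.span {a} : Ideal R) : Set R)) + 1 :=
    colonstep z hsoc a le_sup_left le_rfl haM
  have h3 : Order.height I + 1 ≤ Order.height (I ⊔ Ideal.span {a}) := height_add_one_le hlt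
  calc Order.height (Submodule.colon (⊥ : Ideal R) (I : Set R)) + Order.height I
      ≤ (Order.height (Submodule.colon (⊥ : Ideal R) ((I ⊔ Ideal.span {a} : Ideal R) : Set R)) + 1) + Order.height I :=
        add_le_add_left h2 _
    _ = Order.height (Submodule.colon (⊥ : Ideal R) ((I ⊔ Ideal.span {a} : Ideal R) : Set R)) + (Order.height I + 1) := by ring
    _ ≤ Order.height (Submodule.colon (⊥ : Ideal R) ((I ⊔ Ideal.span {a} : Ideal R) : Set R)) +
        Order.height (I ⊔ Ideal.span {a}) := add_le_add_right h3 _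
    _ ≤ Order.height (⊤ : Ideal R) := h1

lemma colon_colon_eq (hNoe : IsNoetherianRing R) (z : R)
    (hsoc : Submodule.colon (⊥ : Ideal R) (maximalIdeal R : Set R) = Ideal.span {z}) (I : Ideal R) :
    Submodule.colon (⊥ : Ideal R) (Submodule.colon (⊥ : Ideal R) (I : Set R) : Set R) = I := by
  refine le_antisymm ?_ (le_colon_colon I)
  by_contra hne
  have hlt : I < Submodule.colon (⊥ : Ideal R) (Submodule.colon (⊥ : Ideal R) (I : Set R) : Set R) :=
    lt_of_le_not_ge (le_colon_colon I) hne
  have hstrict : Order.height I < Order.height (Submodule.colon (⊥ : Ideal R) (Submodule.colon (⊥ : Ideal R) (I : Set R) : Set R)) :=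
    Order.height_strictMono hlt ((height_ne_top hNoe I).lt_top)
  have hME := mainME hNoe z hsoc (Submodule.colon (⊥ : Ideal R) (I : Set R))
  have hMH := mainMH hNoe z hsoc I
  have hcomb : Order.height (Submodule.colon (⊥ : Ideal R) (Submodule.colon (⊥ : Ideal R) (I : Set R) : Set R)) +
      Order.height (Submodule.colon (⊥ : Ideal R) (I : Set R)) ≤
      Order.height (Submodule.colon (⊥ : Ideal R) (I : Set R)) + Order.height I := hME.trans hMH
  rw [add_comm (Order.height (Submodule.colon (⊥ : Ideal R) (Submodule.colon (⊥ : Ideal R) (I : Set R) : Set R)))] at hcomb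
  have hWle := (WithTop.add_le_add_iff_left (height_ne_top hNoe (Submodule.colon (⊥ : Ideal R) (I : Set R)))).mp hcomb
  exact absurd hWle (not_le.mpr hstrict)

end Aux

set_option maxHeartbeats 1000000 in
theorem stmt10 {R : Type*} [CommRing R] [IsArtinianRing R] [IsLocalRing R]
    (hGor : ∃ z : R, z ≠ 0 ∧ Submodule.colon ⊥ (maximalIdeal R : Set R) = Ideal.span {z})
    (n m : ℕ) (hn0 : 0 < n) (hm2 : 2 ≤ m)
    (hn : mu (maximalIdeal R) = n) (hm : mu ((maximalIdeal R) ^ 2) = m)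
    (x : Fin n → R) (hspan : Ideal.span (Set.range x) = maximalIdeal R)
    (hxm : (maximalIdeal R) ^ 2 = Ideal.span {x ⟨0, hn0⟩} * maximalIdeal R)
    (hzero : ∀ j : Fin n, m ≤ (j : ℕ) → x ⟨0, hn0⟩ * x j = 0) :
    Ideal.span (x '' {i : Fin n | 0 < (i : ℕ) ∧ (i : ℕ) < m}) *
        (Submodule.colon ⊥ (Ideal.span {x ⟨0, hn0⟩} : Set R) ⊓ (maximalIdeal R) ^ 2)
      ≤ Submodule.colon ⊥ (maximalIdeal R : Set R) ∧
    (maximalIdeal R * Ideal.span (x '' {i : Fin n | 0 < (i : ℕ) ∧ (i : ℕ) < m})) *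
        (Submodule.colon ⊥ (Ideal.span {x ⟨0, hn0⟩} : Set R) ⊓ (maximalIdeal R) ^ 2) = ⊥ ∧
    Ideal.span (x '' {i : Fin n | 0 < (i : ℕ) ∧ (i : ℕ) < m}) *
        (maximalIdeal R *
          (Submodule.colon ⊥ (Ideal.span {x ⟨0, hn0⟩} : Set R) ⊓ (maximalIdeal R) ^ 2)) = ⊥ ∧
    (∀ a ∈ Ideal.span (x '' {i : Fin n | 0 < (i : ℕ) ∧ (i : ℕ) < m}),
      (∀ b ∈ Submodule.colon ⊥ (Ideal.span {x ⟨0, hn0⟩} : Set R) ⊓ (maximalIdeal R) ^ 2,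
        a * b = 0) →
      a ∈ maximalIdeal R * Ideal.span (x '' {i : Fin n | 0 < (i : ℕ) ∧ (i : ℕ) < m})) ∧
    (∀ b ∈ Submodule.colon ⊥ (Ideal.span {x ⟨0, hn0⟩} : Set R) ⊓ (maximalIdeal R) ^ 2,
      (∀ a ∈ Ideal.span (x '' {i : Fin n | 0 < (i : ℕ) ∧ (i : ℕ) < m}), a * b = 0) →
      b ∈ maximalIdeal R *
        (Submodule.colon ⊥ (Ideal.span {x ⟨0, hn0⟩} : Set R) ⊓ (maximalIdeal R) ^ 2)) := by
  classical
  obtain ⟨z, hz0, hsoc⟩ := hGor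
  set x0 : R := x ⟨0, hn0⟩ with hx0def
  set A : Ideal R := Ideal.span (x '' {i : Fin n | 0 < (i : ℕ) ∧ (i : ℕ) < m}) with hAdef
  set K : Ideal R := Submodule.colon ⊥ (Ideal.span {x0} : Set R) with hKdef
  set B : Ideal R := K ⊓ (maximalIdeal R) ^ 2 with hBdef
  -- basic facts
  have hxM : ∀ i : Fin n, x i ∈ maximalIdeal R := fun i => by
    rw [← hspan]; exact Submodule.subset_span ⟨i, rfl⟩
  have hALE : A ≤ maximalIdeal R := by
    rw [hAdef, Ideal.span_le]
    rintro w ⟨i, _, rfl⟩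
    exact hxM i
  have hmin : ∀ I : Ideal R, I ≠ ⊥ → z ∈ I := fun I hI => socle_min z hsoc hI
  have hzann : ∀ y ∈ maximalIdeal R, y * z = 0 := by
    intro y hy
    have hzmem : z ∈ Submodule.colon ⊥ (maximalIdeal R : Set R) := by
      rw [hsoc]; exact Submodule.mem_span_singleton_self z
    have := mem_colon_bot.mp hzmem y hy
    linear_combination this
  have hUnit : ∀ r : R, r ∉ maximalIdeal R → IsUnit r := fun r hr => by
    by_contra h
    exact hr ((mem_maximalIdeal r).mpr (mem_nonunits_iff.mpr h))
  -- M is finitely generated, so R is Noetherian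
  have hMfgNe : {k | ∃ s : Finset R, s.card = k ∧
      Ideal.span (s : Set R) = maximalIdeal R}.Nonempty := by
    by_contra h
    rw [Set.not_nonempty_iff_eq_empty] at h
    have : mu (maximalIdeal R) = 0 := by
      show sInf _ = 0
      rw [h, Nat.sInf_empty]
    omega
  obtain ⟨sM, _, hsM⟩ := Nat.sInf_mem hMfgNe
  have hNoe : IsNoetherianRing R := noeth ⟨sM, hsM⟩
  have hmu_le : ∀ s : Finset R, Ideal.span (s : Set R) = (maximalIdeal R)^2 → m ≤ s.card := by
    intro s hs
    have h1 : mu ((maximalIdeal R)^2) ≤ s.card := Nat.sInf_le ⟨s, rfl, hs⟩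
    omega
  -- M² ≠ ⊥, x0² ≠ 0
  have hM2ne : (maximalIdeal R) ^ 2 ≠ ⊥ := by
    intro h
    have := hmu_le ∅ (by simp [h])
    simp at this
    omega
  have hx0sq : x0 * x0 ≠ 0 := by
    intro h
    have h3 : (maximalIdeal R) ^ 3 = ⊥ := by
      have e1 : (maximalIdeal R) ^ 3 = (Ideal.span {x0} * Ideal.span {x0}) * maximalIdeal R := by
        calc (maximalIdeal R) ^ 3 = (maximalIdeal R)^2 * maximalIdeal R := by rw [pow_succ]
          _ = (Ideal.span {x0} * maximalIdeal R) * maximalIdeal R := by rw [hxm]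
          _ = Ideal.span {x0} * ((maximalIdeal R) * maximalIdeal R) := by ring
          _ = Ideal.span {x0} * (maximalIdeal R)^2 := by rw [← pow_two]
          _ = Ideal.span {x0} * (Ideal.span {x0} * maximalIdeal R) := by rw [hxm]
          _ = (Ideal.span {x0} * Ideal.span {x0}) * maximalIdeal R := by ring
      rw [e1, Ideal.span_singleton_mul_span_singleton, h]
      rw [show Ideal.span ({(0:R)} : Set R) = ⊥ by simp]
      rw [Submodule.bot_mul]
    have hsocle2 : (maximalIdeal R)^2 ≤ Ideal.span {z} := by
      rw [← hsoc]
      intro c hc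
      rw [mem_colon_bot]
      intro r hr
      have h1 : c * r ∈ (maximalIdeal R)^2 * maximalIdeal R := Ideal.mul_mem_mul hc hr
      rw [← pow_succ, h3, Submodule.mem_bot] at h1
      exact h1
    have hzM2 : z ∈ (maximalIdeal R)^2 := hmin _ hM2ne
    have heq2 : (maximalIdeal R)^2 = Ideal.span {z} :=
      le_antisymm hsocle2 (by rwa [Ideal.span_le, Set.singleton_subset_iff])
    have := hmu_le {z} (by simpa using heq2.symm)
    simp at this
    omega
  -- nilpotency exponent for x0
  have hsex : ∃ k : ℕ, x0 ^ (k+1) = 0 := by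
    obtain ⟨k, hk⟩ := nilpM (R := R)
    refine ⟨k, ?_⟩
    have h1 : x0 ^ (k+1) ∈ (maximalIdeal R) ^ (k+1) := Ideal.pow_mem_pow (hxM _) _
    have h2 : (maximalIdeal R) ^ (k+1) ≤ (maximalIdeal R) ^ k :=
      Ideal.pow_le_pow_right (by omega)
    have := h2 h1
    rwa [hk, Submodule.mem_bot] at this
  set s : ℕ := Nat.find hsex with hsdef
  have hs1 : x0 ^ (s+1) = 0 := Nat.find_spec hsex
  have hs2 : ∀ j : ℕ, j ≤ s → x0 ^ j ≠ 0 := by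
    intro j hj h0
    rcases Nat.eq_zero_or_pos j with rfl | hjpos
    · rw [pow_zero] at h0
      exact one_ne_zero h0
    · refine Nat.find_min hsex (m := j - 1) (by omega) ?_
      rw [show j - 1 + 1 = j by omega]
      exact h0
  have hs_ge2 : 2 ≤ s := by
    by_contra h
    apply hx0sq
    have h2 : x0 ^ 2 = 0 := by
      have e : x0 ^ 2 = x0 ^ (s+1) * x0 ^ (2 - (s+1)) := by
        rw [← pow_add]
        congr 1
        omega
      rw [e, hs1, zero_mul]
    rwa [pow_two] at h2
  -- generic lemma: to contain M², it suffices to contain all x0 * x i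
  have hmulspan : ∀ J : Ideal R, (∀ i : Fin n, x0 * x i ∈ J) → (maximalIdeal R)^2 ≤ J := by
    intro J hJ
    rw [hxm]
    refine Submodule.mul_le.mpr fun p hp q hq => ?_
    obtain ⟨e, he⟩ := Ideal.mem_span_singleton'.mp hp
    have hq' : x0 * q ∈ J := by
      rw [← hspan] at hq
      induction hq using Submodule.span_induction with
      | mem w hw =>
        obtain ⟨i, rfl⟩ := hw
        exact hJ i
      | zero => rw [mul_zero]; exact J.zero_mem
      | add w₁ w₂ h₁ h₂ ih₁ ih₂ => rw [mul_add]; exact J.add_mem ih₁ ih₂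
      | smul r w hw ih =>
        rw [smul_eq_mul, show x0*(r*w) = r*(x0*w) by ring]
        exact Ideal.mul_mem_left _ _ ih
    rw [← he, mul_assoc]
    exact Ideal.mul_mem_left _ _ hq'
  -- m ≤ n
  have hmn : m ≤ n := by
    have hspanF : Ideal.span ((Finset.univ.image (fun i : Fin n => x0 * x i) : Finset R) : Set R)
        = (maximalIdeal R)^2 := by
      apply le_antisymm
      · rw [Ideal.span_le]
        intro w hw
        rw [Finset.coe_image, Finset.coe_univ, Set.image_univ] at hw
        obtain ⟨i, rfl⟩ := hw
        rw [pow_two]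
        exact Ideal.mul_mem_mul (hxM _) (hxM _)
      · refine hmulspan _ fun i => Submodule.subset_span ?_
        rw [Finset.coe_image, Finset.coe_univ, Set.image_univ]
        exact ⟨i, rfl⟩
    have h1 := hmu_le _ hspanF
    have h2 : (Finset.univ.image (fun i : Fin n => x0 * x i)).card ≤ n :=
      le_trans Finset.card_image_le (by simp)
    omega
  have h1n : 1 < n := by omega
  -- the contradiction machine
  have hgen : ∀ v₀ : R, v₀ ∈ x '' {i : Fin n | 0 < (i : ℕ) ∧ (i : ℕ) < m} →
      x0 * v₀ ∈ Ideal.span (insert (x0*x0)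
        ((fun v => x0 * v) '' ((x '' {i : Fin n | 0 < (i : ℕ) ∧ (i : ℕ) < m}) \ {v₀}))) →
      False := by
    intro v₀ hv₀ hv₀span
    obtain ⟨j₀, hj₀, hj₀x⟩ := hv₀
    set E : Set R := insert (x0*x0)
      ((fun v => x0 * v) '' ((x '' {i : Fin n | 0 < (i : ℕ) ∧ (i : ℕ) < m}) \ {v₀})) with hE
    have hEM : Ideal.span E = (maximalIdeal R)^2 := by
      apply le_antisymm
      · rw [Ideal.span_le]
        rintro w (rfl | ⟨v, ⟨⟨i, _, rfl⟩, _⟩, rfl⟩)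
        · rw [pow_two]; exact Ideal.mul_mem_mul (hxM _) (hxM _)
        · rw [pow_two]; exact Ideal.mul_mem_mul (hxM _) (hxM _)
      · refine hmulspan _ fun i => ?_
        by_cases h0 : (i : ℕ) = 0
        · have : i = ⟨0, hn0⟩ := Fin.ext h0
          rw [this]
          exact Submodule.subset_span (Set.mem_insert _ _)
        by_cases hm' : m ≤ (i : ℕ)
        · rw [hzero i hm']
          exact Ideal.zero_mem _
        · by_cases hvv : x i = v₀
          · rw [hvv]; exact hv₀span
          · refine Submodule.subset_span (Set.mem_insert_iff.mpr (Or.inr ?_))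
            exact ⟨x i, ⟨⟨i, ⟨Nat.pos_of_ne_zero h0, not_le.mp hm'⟩, rfl⟩, hvv⟩, rfl⟩
    set F₁ : Finset R :=
      (Finset.univ.filter (fun i : Fin n => 0 < (i:ℕ) ∧ (i:ℕ) < m)).image x with hF₁
    have hv₀F₁ : v₀ ∈ F₁ :=
      Finset.mem_image.mpr ⟨j₀, Finset.mem_filter.mpr ⟨Finset.mem_univ _, hj₀⟩, hj₀x⟩
    set F : Finset R := insert (x0*x0) ((F₁.erase v₀).image (fun v => x0*v)) with hF
    have hFE : (F : Set R) = E := by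
      rw [hF, hE, hF₁]
      ext w
      simp only [Finset.coe_insert, Set.mem_insert_iff, Finset.coe_image, Finset.coe_erase,
        Finset.coe_filter, Finset.mem_univ, true_and, Set.mem_image, Set.mem_diff,
        Set.mem_singleton_iff, Finset.mem_coe, Finset.mem_image, Finset.mem_filter,
        Set.mem_setOf_eq, Finset.mem_erase]
    have hcard : F.card ≤ m - 1 := by
      rw [hF]
      have hval : ∀ i₂ ∈ Finset.univ.filter (fun i : Fin n => 0 < (i:ℕ) ∧ (i:ℕ) < m),
          (i₂ : ℕ) ∈ Finset.Ico 1 m := by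
        intro i₂ hi₂
        rw [Finset.mem_filter] at hi₂
        rw [Finset.mem_Ico]
        omega
      have h1 : (Finset.univ.filter (fun i : Fin n => 0 < (i:ℕ) ∧ (i:ℕ) < m)).card ≤ m - 1 := by
        have := Finset.card_le_card_of_injOn (fun i : Fin n => (i : ℕ)) hval
          (Fin.val_injective.injOn)
        rwa [Nat.card_Ico] at this
      have h2 : F₁.card ≤ m - 1 := le_trans Finset.card_image_le h1
      have h3 : (F₁.erase v₀).card = F₁.card - 1 := Finset.card_erase_of_mem hv₀F₁
      have h4 : ((F₁.erase v₀).image (fun v => x0*v)).card ≤ F₁.card - 1 := by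
        rw [← h3]; exact Finset.card_image_le
      have h5 : 1 ≤ F₁.card := Finset.card_pos.mpr ⟨v₀, hv₀F₁⟩
      have h6 := Finset.card_insert_le (x0*x0) ((F₁.erase v₀).image (fun v => x0*v))
      omega
    have hmF : m ≤ F.card := hmu_le F (by rw [hFE, hEM])
    omega
  -- span{x0} * K = ⊥
  have hspanK : Ideal.span {x0} * K = ⊥ := by
    rw [eq_bot_iff]
    refine Submodule.mul_le.mpr fun p hp q hq => ?_
    obtain ⟨e, he⟩ := Ideal.mem_span_singleton'.mp hp
    have h1 : q * x0 = 0 := mem_colon_bot.mp hq x0 (Submodule.mem_span_singleton_self x0)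
    rw [Submodule.mem_bot, ← he]
    linear_combination e * h1
  -- parts 1-3
  have hpart2 : (maximalIdeal R * A) * B = ⊥ := by
    rw [eq_bot_iff]
    calc (maximalIdeal R * A) * B ≤ (maximalIdeal R * maximalIdeal R) * B :=
          Ideal.mul_mono (Ideal.mul_mono le_rfl hALE) le_rfl
      _ = (Ideal.span {x0} * maximalIdeal R) * B := by rw [← pow_two, hxm]
      _ = Ideal.span {x0} * (maximalIdeal R * B) := by rw [mul_assoc]
      _ ≤ Ideal.span {x0} * K := by
          refine Ideal.mul_mono le_rfl ?_
          refine le_trans (Ideal.mul_mono le_rfl inf_le_left) Ideal.mul_le_right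
      _ = ⊥ := hspanK
  have hpart1 : A * B ≤ Submodule.colon ⊥ (maximalIdeal R : Set R) := by
    intro cc hcc
    rw [mem_colon_bot]
    intro p hp
    have h1 : cc * p ∈ (A*B) * maximalIdeal R := Ideal.mul_mem_mul hcc hp
    have heq : (A*B) * maximalIdeal R = (maximalIdeal R * A) * B := by ring
    rw [heq, hpart2, Submodule.mem_bot] at h1
    exact h1
  have hpart3 : A * (maximalIdeal R * B) = ⊥ := by
    rw [show A * (maximalIdeal R * B) = (maximalIdeal R * A) * B by ring, hpart2]
  -- part 4
  have hpart4 : ∀ a ∈ A, (∀ b ∈ B, a * b = 0) → a ∈ maximalIdeal R * A := by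
    intro a ha hab
    rw [hAdef] at ha
    obtain ⟨c, hcsupp, hcsum⟩ := Submodule.mem_span_set.mp ha
    by_cases hall : ∀ v ∈ c.support, c v ∈ maximalIdeal R
    · rw [← hcsum]
      refine Submodule.sum_mem _ fun v hv => ?_
      simp only [smul_eq_mul]
      exact Ideal.mul_mem_mul (hall v hv) (Submodule.subset_span (hcsupp hv))
    push_neg at hall
    obtain ⟨v₀, hv₀supp, hv₀M⟩ := hall
    exfalso
    have hv₀S : v₀ ∈ x '' {i : Fin n | 0 < (i : ℕ) ∧ (i : ℕ) < m} := hcsupp hv₀supp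
    obtain ⟨u, hu⟩ := hUnit _ hv₀M
    -- duality step
    have hxa : x0 * a ∈ Ideal.span {x0*x0} := by
      rw [← colon_colon_eq hNoe z hsoc (Ideal.span {x0*x0})]
      rw [mem_colon_bot]
      intro r hr
      have hrx : r * (x0*x0) = 0 :=
        mem_colon_bot.mp hr _ (Submodule.mem_span_singleton_self _)
      have hrM : r ∈ maximalIdeal R := by
        by_contra h
        obtain ⟨ur, hur⟩ := hUnit _ h
        apply hx0sq
        have e : x0*x0 = (↑ur⁻¹:R) * (r * (x0*x0)) := by
          rw [← hur, ← mul_assoc, Units.inv_mul, one_mul]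
        rw [hrx, mul_zero] at e
        exact e
      have hbB : x0 * r ∈ B := by
        rw [hBdef, Submodule.mem_inf]
        constructor
        · rw [hKdef, mem_colon_bot]
          intro p hp
          obtain ⟨e, he⟩ := Ideal.mem_span_singleton'.mp hp
          rw [← he]
          linear_combination e * hrx
        · rw [hxm]
          exact Ideal.mul_mem_mul (Submodule.mem_span_singleton_self x0) hrM
      have := hab _ hbB
      linear_combination this
    obtain ⟨w, hw⟩ := Ideal.mem_span_singleton'.mp hxa
    -- rearrange the sum
    have hcsum' : ∑ v ∈ c.support, c v * v = a := by
      rw [← hcsum]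
      simp [Finsupp.sum, smul_eq_mul]
    have hsum' : c v₀ * v₀ + ∑ v ∈ c.support.erase v₀, c v * v = a := by
      rw [← hcsum', add_comm]
      exact Finset.sum_erase_add _ _ hv₀supp
    have h2 : x0 * a = c v₀ * (x0*v₀) + ∑ v ∈ c.support.erase v₀, c v * (x0*v) := by
      rw [← hsum', mul_add, Finset.mul_sum]
      congr 1
      · ring
      · exact Finset.sum_congr rfl fun v _ => by ring
    have h3 : c v₀ * (x0*v₀) = w*(x0*x0) - ∑ v ∈ c.support.erase v₀, c v * (x0*v) := by
      linear_combination -hw - h2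
    have hinv : ((↑u⁻¹ : R) * c v₀) = 1 := by rw [← hu]; exact u.inv_mul
    have hkey : x0*v₀ = (↑u⁻¹ : R)*(w*(x0*x0)) -
        ∑ v ∈ c.support.erase v₀, ((↑u⁻¹ : R) * c v) * (x0*v) := by
      have h4 : (↑u⁻¹ : R) * (c v₀ * (x0*v₀)) =
          (↑u⁻¹:R) * (w*(x0*x0) - ∑ v ∈ c.support.erase v₀, c v * (x0*v)) := by rw [h3]
      rw [← mul_assoc, hinv, one_mul] at h4
      rw [h4, mul_sub, Finset.mul_sum]
      congr 1
      exact Finset.sum_congr rfl fun v _ => by ring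
    refine hgen v₀ hv₀S ?_
    rw [hkey]
    refine Submodule.sub_mem _ ?_ (Submodule.sum_mem _ fun v hv => ?_)
    · exact Ideal.mul_mem_left _ _
        (Ideal.mul_mem_left _ _ (Submodule.subset_span (Set.mem_insert _ _)))
    · refine Ideal.mul_mem_left _ _ (Submodule.subset_span (Set.mem_insert_iff.mpr (Or.inr ?_)))
      exact ⟨v, ⟨hcsupp (Finset.mem_of_mem_erase hv), (Finset.mem_erase.mp hv).1⟩, rfl⟩
  -- part 5
  have hpart5 : ∀ b ∈ B, (∀ a ∈ A, a * b = 0) → b ∈ maximalIdeal R * B := by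
    intro b hb hab
    have hbK : b ∈ K := (Submodule.mem_inf.mp hb).1
    have hbM2 : b ∈ (maximalIdeal R)^2 := (Submodule.mem_inf.mp hb).2
    have hbsoc : ∀ p ∈ maximalIdeal R, b * p = 0 := by
      intro p hp
      rw [← hspan] at hp
      induction hp using Submodule.span_induction with
      | mem w hw =>
        obtain ⟨i, rfl⟩ := hw
        by_cases h0 : (i : ℕ) = 0
        · have : i = ⟨0, hn0⟩ := Fin.ext h0
          rw [this]
          exact mem_colon_bot.mp hbK x0 (Submodule.mem_span_singleton_self x0)
        by_cases hm' : m ≤ (i : ℕ)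
        · have hbx0 : b ∈ Ideal.span {x0} := by
            have : (maximalIdeal R)^2 ≤ Ideal.span {x0} := by
              rw [hxm]; exact Ideal.mul_le_left
            exact this hbM2
          obtain ⟨e, he⟩ := Ideal.mem_span_singleton'.mp hbx0
          rw [← he]
          linear_combination e * hzero i hm'
        · have := hab (x i) (Submodule.subset_span
            ⟨i, ⟨Nat.pos_of_ne_zero h0, not_le.mp hm'⟩, rfl⟩)
          linear_combination this
      | zero => rw [mul_zero]
      | add w₁ w₂ h₁ h₂ ih₁ ih₂ => rw [mul_add, ih₁, ih₂, add_zero]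
      | smul r w hw ih =>
        rw [smul_eq_mul, show b * (r * w) = r * (b * w) by ring, ih, mul_zero]
    by_cases hb0 : b = 0
    · rw [hb0]; exact Ideal.zero_mem _
    have hMB : maximalIdeal R * B ≠ ⊥ := by
      intro hMB0
      have hBsoc : ∀ b' ∈ B, ∀ p ∈ maximalIdeal R, b' * p = 0 := by
        intro b' hb' p hp
        have h1 : p * b' ∈ maximalIdeal R * B := Ideal.mul_mem_mul hp hb'
        rw [hMB0, Submodule.mem_bot] at h1
        linear_combination h1
      have key : ∀ d : ℕ, d ≤ s → ∃ r : R, x0^(s+1-d) * (x ⟨1, h1n⟩ - x0*r) = 0 := by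
        intro d
        induction d with
        | zero =>
          intro _
          refine ⟨0, ?_⟩
          rw [Nat.sub_zero, hs1, zero_mul]
        | succ d ih =>
          intro hd
          obtain ⟨r, hr⟩ := ih (by omega)
          have hrt : x0^((s-d)+1) * (x ⟨1, h1n⟩ - x0*r) = 0 := by
            rw [show (s-d)+1 = s+1-d by omega]
            exact hr
          set t : ℕ := s - d with htdef
          have ht1 : 1 ≤ t := by omega
          set y : R := x ⟨1, h1n⟩ - x0*r with hy
          rw [show s+1-(d+1) = t by omega]
          by_cases hb'0 : x0^t * y = 0
          · exact ⟨r, hb'0⟩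
          have hyM : y ∈ maximalIdeal R := by
            rw [hy]
            exact Submodule.sub_mem _ (hxM _) (Ideal.mul_mem_right _ _ (hxM _))
          have hbB' : x0^t * y ∈ B := by
            rw [hBdef, Submodule.mem_inf]
            constructor
            · rw [hKdef, mem_colon_bot]
              intro p hp
              obtain ⟨e, he⟩ := Ideal.mem_span_singleton'.mp hp
              rw [← he]
              linear_combination e * hrt
            · have h1 : x0^t * y ∈ (maximalIdeal R)^(t+1) := by
                have h2 : x0^t ∈ (maximalIdeal R)^t := Ideal.pow_mem_pow (hxM _) _
                have h3 := Ideal.mul_mem_mul h2 hyM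
                rwa [← pow_succ] at h3
              exact Ideal.pow_le_pow_right (by omega) h1
          by_cases hxt1 : x0^(t+1) = 0
          · exfalso
            have hts : t = s := by
              have hA1 : t ≤ s := by omega
              have hA2 : ¬ (t+1 ≤ s) := fun hh => hs2 (t+1) hh hxt1
              omega
            have hxsB : x0^s ∈ B := by
              rw [hBdef, Submodule.mem_inf]
              constructor
              · rw [hKdef, mem_colon_bot]
                intro p hp
                obtain ⟨e, he⟩ := Ideal.mem_span_singleton'.mp hp
                rw [← he]
                linear_combination e * hs1
              · exact Ideal.pow_le_pow_right hs_ge2 (Ideal.pow_mem_pow (hxM _) _)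
            have := hBsoc _ hxsB y hyM
            rw [hts] at hb'0
            exact hb'0 this
          · have hzmem : z ∈ Ideal.span {x0^(t+1)} :=
              hmin _ (fun hh => hxt1 (Ideal.span_singleton_eq_bot.mp hh))
            obtain ⟨w, hwz⟩ := Ideal.mem_span_singleton'.mp hzmem
            have hbz : x0^t * y ∈ Ideal.span {z} := by
              rw [← hsoc, mem_colon_bot]
              exact hBsoc _ hbB'
            obtain ⟨e, he⟩ := Ideal.mem_span_singleton'.mp hbz
            refine ⟨r + e*w, ?_⟩
            have hye : x ⟨1, h1n⟩ - x0*(r+e*w) = y - x0*(e*w) := by rw [hy]; ring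
            rw [hye]
            linear_combination -he - e*hwz
      obtain ⟨r, hr⟩ := key s le_rfl
      have hr1 : x0 * (x ⟨1, h1n⟩ - x0*r) = 0 := by
        rw [show s+1-s = 1 by omega] at hr
        rw [pow_one] at hr
        exact hr
      refine hgen (x ⟨1, h1n⟩) ⟨⟨1, h1n⟩, ⟨by simp, by show 1 < m; omega⟩, rfl⟩ ?_
      have he : x0 * x ⟨1, h1n⟩ = r*(x0*x0) := by linear_combination hr1
      rw [he]
      exact Ideal.mul_mem_left _ _ (Submodule.subset_span (Set.mem_insert _ _))
    have hzMB : z ∈ maximalIdeal R * B := hmin _ hMB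
    have hbz : b ∈ Ideal.span {z} := by
      rw [← hsoc, mem_colon_bot]
      exact hbsoc
    obtain ⟨e, he⟩ := Ideal.mem_span_singleton'.mp hbz
    rw [← he]
    exact Ideal.mul_mem_left _ _ hzMB
  exact ⟨hpart1, hpart2, hpart3, hpart4, hpart5⟩
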